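/- Let n ≥ 5 and p = 2, and let V be the quotient of the permutation F_2-representation of S_n on F_2^n by the span of the all-ones vector, with n odd. Then H^1(A_n, V) = 0. -/

import Mathlib

/-- The quotient representation on `M ⧸ S` for an invariant submodule `S`. -/
noncomputable def Representation.quot {k G M : Type} [CommRing k] [Group G] [AddCommGroup M]
    [Module k M] (ρ : Representation k G M) (S : Submodule k M)
    (hS : ∀ g : G, ∀ x ∈ S, ρ g x ∈ S) : Representation k G (M ⧸ S) where
  toFun g := S.mapQ S (ρ g) fun x hx => hS g x hx
  map_one' := Submodule.linearMap_qext _ (by ext x; simp)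
  map_mul' g h := Submodule.linearMap_qext _ (by ext x; simp [Submodule.mapQ_apply])

/-- The permutation representation of `S_n` on `F_p[X]`, `X = {1,...,n}`. -/
noncomputable def permRep (p n : ℕ) :
    Representation (ZMod p) (Equiv.Perm (Fin n)) (Fin n →₀ ZMod p) :=
  { toFun := fun g => Finsupp.lmapDomain (ZMod p) (ZMod p) (g • ·)
    map_one' := by ext x y; simp
    map_mul' := fun x y => by ext z w; simp [mul_smul, ← Finsupp.mapDomain_comp] }

/-- The sum of all basis vectors `e_1 + ... + e_n`. -/
noncomputable def allOnes (p n : ℕ) : Fin n →₀ ZMod p := ∑ i, Finsupp.single i 1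

/-- The submodule `D` spanned by the sum of all basis vectors. -/
noncomputable def allOnesLine (p n : ℕ) : Submodule (ZMod p) (Fin n →₀ ZMod p) :=
  Submodule.span (ZMod p) {allOnes p n}

lemma permRep_allOnes (p n : ℕ) (σ : Equiv.Perm (Fin n)) :
    permRep p n σ (allOnes p n) = allOnes p n := by
  unfold permRep allOnes
  rw [map_sum]
  refine Fintype.sum_equiv σ _ _ fun i => ?_
  simp [Finsupp.mapDomain_single]

lemma allOnesLine_invariant (p n : ℕ) (σ : Equiv.Perm (Fin n)) :
    ∀ x ∈ allOnesLine p n, permRep p n σ x ∈ allOnesLine p n := by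
  intro x hx
  obtain ⟨c, rfl⟩ := Submodule.mem_span_singleton.1 hx
  rw [map_smul, permRep_allOnes]
  exact Submodule.smul_mem _ _ (Submodule.mem_span_singleton_self _)

/-- The quotient `V = F_p[X]/D` of the permutation representation by the all-ones line. -/
noncomputable def stdQuotRep (p n : ℕ) :
    Representation (ZMod p) (Equiv.Perm (Fin n)) ((Fin n →₀ ZMod p) ⧸ allOnesLine p n) :=
  (permRep p n).quot (allOnesLine p n) (allOnesLine_invariant p n)

/-! ### Auxiliary material for statement4 -/

open Equiv Equiv.Perm

namespace Statement4Aux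

lemma zmod2_add_self : ∀ a : ZMod 2, a + a = 0 := by decide

lemma char2_add_self {M : Type*} [AddCommGroup M] [Module (ZMod 2) M] (x : M) : x + x = 0 := by
  have h := two_smul (ZMod 2) x
  rw [show (2 : ZMod 2) = 0 by decide, zero_smul] at h
  exact h.symm

/-- evaluation of the permutation representation. -/
lemma permRep_apply {n : ℕ} (g : Perm (Fin n)) (x : Fin n →₀ ZMod 2) (i : Fin n) :
    permRep 2 n g x i = x (g⁻¹ i) := by
  show Finsupp.mapDomain (g • ·) x i = _
  conv_lhs => rw [← Equiv.apply_symm_apply g i]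
  exact Finsupp.mapDomain_apply (MulAction.injective g) x (g⁻¹ i)

/-- The coordinate-sum linear functional. -/
noncomputable def sumCo (n : ℕ) : (Fin n →₀ ZMod 2) →ₗ[ZMod 2] ZMod 2 :=
  Finsupp.lsum (ZMod 2) fun _ => LinearMap.id

lemma sumCo_single {n : ℕ} (i : Fin n) (a : ZMod 2) : sumCo n (Finsupp.single i a) = a := by
  simp [sumCo]

lemma sumCo_perm {n : ℕ} (g : Perm (Fin n)) (x : Fin n →₀ ZMod 2) :
    sumCo n (permRep 2 n g x) = sumCo n x := by
  have : (sumCo n).comp (permRep 2 n g : (Fin n →₀ ZMod 2) →ₗ[ZMod 2] (Fin n →₀ ZMod 2))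
      = sumCo n := by
    apply Finsupp.lhom_ext
    intro a b
    simp only [LinearMap.comp_apply]
    rw [show (permRep 2 n g : (Fin n →₀ ZMod 2) →ₗ[ZMod 2] (Fin n →₀ ZMod 2)) (Finsupp.single a b)
        = Finsupp.single (g a) b from Finsupp.mapDomain_single,
      sumCo_single, sumCo_single]
  exact LinearMap.congr_fun this x

lemma sumCo_allOnes {n : ℕ} (hodd : Odd n) : sumCo n (allOnes 2 n) = 1 := by
  obtain ⟨m, hm⟩ := hodd
  rw [allOnes, map_sum]
  simp only [sumCo_single]
  rw [Finset.sum_const, Finset.card_univ, Fintype.card_fin, nsmul_eq_mul, mul_one, hm]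
  push_cast
  rw [show (2 : ZMod 2) = 0 by decide]
  ring

/-- The equivariant projection onto the sum-zero subspace (n odd). -/
noncomputable def proj0 (n : ℕ) : (Fin n →₀ ZMod 2) →ₗ[ZMod 2] (Fin n →₀ ZMod 2) :=
  LinearMap.id + (sumCo n).smulRight (allOnes 2 n)

lemma proj0_apply {n : ℕ} (x : Fin n →₀ ZMod 2) :
    proj0 n x = x + sumCo n x • allOnes 2 n := rfl

lemma proj0_allOnes {n : ℕ} (hodd : Odd n) : proj0 n (allOnes 2 n) = 0 := by
  rw [proj0_apply, sumCo_allOnes hodd, one_smul]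
  exact char2_add_self _

lemma proj0_perm {n : ℕ} (g : Perm (Fin n)) (x : Fin n →₀ ZMod 2) :
    proj0 n (permRep 2 n g x) = permRep 2 n g (proj0 n x) := by
  rw [proj0_apply, proj0_apply, map_add, map_smul, sumCo_perm, permRep_allOnes]

/-- Equivariant linear section of the quotient map (n odd). -/
noncomputable def sect (n : ℕ) (hodd : Odd n) :
    ((Fin n →₀ ZMod 2) ⧸ allOnesLine 2 n) →ₗ[ZMod 2] (Fin n →₀ ZMod 2) :=
  Submodule.liftQ _ (proj0 n) (by
    rw [allOnesLine, Submodule.span_le, Set.singleton_subset_iff]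
    exact proj0_allOnes hodd)

lemma sect_mk {n : ℕ} (hodd : Odd n) (x : Fin n →₀ ZMod 2) :
    sect n hodd (Submodule.Quotient.mk x) = proj0 n x := rfl

lemma mk_sect {n : ℕ} (hodd : Odd n) (x : (Fin n →₀ ZMod 2) ⧸ allOnesLine 2 n) :
    Submodule.Quotient.mk (sect n hodd x) = x := by
  obtain ⟨y, rfl⟩ := Submodule.Quotient.mk_surjective _ x
  rw [sect_mk, proj0_apply]
  have h1 : (Submodule.Quotient.mk (allOnes 2 n) :
      (Fin n →₀ ZMod 2) ⧸ allOnesLine 2 n) = 0 :=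
    (Submodule.Quotient.mk_eq_zero _).2 (Submodule.mem_span_singleton_self _)
  rw [Submodule.Quotient.mk_add, Submodule.Quotient.mk_smul, h1, smul_zero, add_zero]

lemma stdQuotRep_mk {n : ℕ} (g : Perm (Fin n)) (x : Fin n →₀ ZMod 2) :
    stdQuotRep 2 n g (Submodule.Quotient.mk x) = Submodule.Quotient.mk (permRep 2 n g x) := rfl

lemma sect_equivariant {n : ℕ} (hodd : Odd n) (g : Perm (Fin n))
    (x : (Fin n →₀ ZMod 2) ⧸ allOnesLine 2 n) :
    sect n hodd (stdQuotRep 2 n g x) = permRep 2 n g (sect n hodd x) := by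
  obtain ⟨y, rfl⟩ := Submodule.Quotient.mk_surjective _ x
  rw [stdQuotRep_mk, sect_mk, sect_mk, proj0_perm]

/-- Transitivity of `A_n` on points, for `n ≥ 3`. -/
lemma exists_even_sending {n : ℕ} (hn : 5 ≤ n) (j i : Fin n) :
    ∃ g : Perm (Fin n), g ∈ alternatingGroup (Fin n) ∧ g j = i := by
  by_cases hij : i = j
  · exact ⟨1, one_mem _, by simp [hij]⟩
  · have hk : ∃ k : Fin n, k ≠ i ∧ k ≠ j := by
      by_contra h
      push_neg at h
      have hsub : (Finset.univ : Finset (Fin n)) ⊆ {i, j} := by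
        intro k _
        rcases eq_or_ne k i with h' | h'
        · simp [h']
        · simp [h k h']
      have := Finset.card_le_card hsub
      have h2 : ({i, j} : Finset (Fin n)).card ≤ 2 :=
        (Finset.card_insert_le _ _).trans (by simp)
      simp only [Finset.card_univ, Fintype.card_fin] at this
      omega
    obtain ⟨k, hki, hkj⟩ := hk
    refine ⟨Equiv.swap k i * Equiv.swap j k, ?_, ?_⟩
    · rw [mem_alternatingGroup, map_mul, sign_swap hki, sign_swap (Ne.symm hkj)]
      decide
    · rw [Perm.mul_apply, swap_apply_left, swap_apply_left]

/-- For any `n ≥ 5`, a "cocycle-like" function on the alternating group vanishes at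
coordinate `j` on elements fixing `j`. -/
lemma stab_vanish {n : ℕ} (Φ : Perm (Fin n) → (Fin n →₀ ZMod 2))
    (hΦ : ∀ g h : Perm (Fin n), g ∈ alternatingGroup (Fin n) → h ∈ alternatingGroup (Fin n) →
      Φ (g * h) = permRep 2 n g (Φ h) + Φ g)
    (hΦ1 : Φ 1 = 0) (j : Fin n) (g : Perm (Fin n)) (hg : g ∈ alternatingGroup (Fin n))
    (hgj : g j = j) : Φ g j = 0 := by
  classical
  -- coordinate additivity at j for elements fixing j
  have hadd : ∀ a b : Perm (Fin n), a ∈ alternatingGroup (Fin n) →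
      b ∈ alternatingGroup (Fin n) → a j = j → Φ (a * b) j = Φ b j + Φ a j := by
    intro a b ha hb haj
    have h1 : Φ (a * b) = permRep 2 n a (Φ b) + Φ a := hΦ a b ha hb
    have h2 : a⁻¹ j = j := by
      conv_lhs => rw [← haj]
      exact Equiv.symm_apply_apply a j
    rw [h1]
    rw [Finsupp.add_apply, permRep_apply, h2]
  -- pass to the subtype permutation
  set p : Fin n → Prop := fun i => i ≠ j with hp
  have h₁ : ∀ x, p (g x) ↔ p x := by
    intro x
    simp only [hp, ne_eq]
    constructor
    · intro hgx hx
      exact hgx (by rw [hx, hgj])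
    · intro hx hgx
      exact hx (g.injective (by rw [hgx, hgj]))
  have h₂ : ∀ x, g x ≠ x → p x := by
    intro x hx
    intro hxj
    exact hx (by rw [hxj, hgj])
  have hg_eq : ofSubtype (g.subtypePerm h₁) = g := ofSubtype_subtypePerm h₁ h₂
  -- membership of subtypePerm in the alternating group of the subtype
  have hmem : ∀ σ : Perm (Subtype p), Perm.sign σ = 1 →
      ofSubtype σ ∈ alternatingGroup (Fin n) := by
    intro σ hσ
    rw [mem_alternatingGroup, sign_ofSubtype]
    exact hσ
  have hfix : ∀ σ : Perm (Subtype p), ofSubtype σ j = j := by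
    intro σ
    apply ofSubtype_apply_of_not_mem
    simp [hp]
  have hsub_mem : g.subtypePerm h₁ ∈ alternatingGroup (Subtype p) := by
    rw [mem_alternatingGroup]
    have : Perm.sign (ofSubtype (g.subtypePerm h₁)) = 1 := by
      rw [hg_eq]; exact mem_alternatingGroup.1 hg
    rwa [sign_ofSubtype] at this
  rw [← closure_three_cycles_eq_alternating] at hsub_mem
  have key : ∀ σ : Perm (Subtype p), σ ∈ Subgroup.closure {τ : Perm (Subtype p) | τ.IsThreeCycle}
      → Φ (ofSubtype σ) j = 0 := by
    intro σ hσ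
    induction hσ using Subgroup.closure_induction with
    | mem τ hτ =>
      -- τ is a three-cycle; t := ofSubtype τ has t^3 = 1
      set t := ofSubtype τ with ht
      have htmem : t ∈ alternatingGroup (Fin n) := hmem τ hτ.sign
      have htfix : t j = j := hfix τ
      have ht3 : t * t * t = 1 := by
        have h3 : τ ^ 3 = 1 := by
          rw [← hτ.orderOf]; exact pow_orderOf_eq_one τ
        have h4 : t ^ 3 = 1 := by rw [ht, ← map_pow, h3, map_one]
        rw [pow_succ, pow_succ, pow_one] at h4
        exact h4
      have h2 : Φ (t * t) j = 0 := by
        rw [hadd t t htmem htmem htfix]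
        exact zmod2_add_self _
      have h2mem : t * t ∈ alternatingGroup (Fin n) := mul_mem htmem htmem
      have h2fix : (t * t) j = j := by rw [Perm.mul_apply, htfix, htfix]
      have h3' : Φ (t * t * t) j = Φ t j + Φ (t * t) j := hadd (t * t) t h2mem htmem h2fix
      rw [ht3, hΦ1] at h3'
      simp only [Finsupp.coe_zero, Pi.zero_apply] at h3'
      rw [h2, add_zero] at h3'
      exact h3'.symm
    | one =>
      rw [map_one, hΦ1]; rfl
    | mul x y hx hy ihx ihy =>
      have hxa : ofSubtype x ∈ alternatingGroup (Fin n) := by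
        rw [closure_three_cycles_eq_alternating] at hx
        exact hmem x (mem_alternatingGroup.1 hx)
      have hya : ofSubtype y ∈ alternatingGroup (Fin n) := by
        rw [closure_three_cycles_eq_alternating] at hy
        exact hmem y (mem_alternatingGroup.1 hy)
      rw [map_mul, hadd _ _ hxa hya (hfix x), ihx, ihy, add_zero]
    | inv x hx ihx =>
      have hxa : ofSubtype x ∈ alternatingGroup (Fin n) := by
        rw [closure_three_cycles_eq_alternating] at hx
        exact hmem x (mem_alternatingGroup.1 hx)
      have hxinva : ofSubtype x⁻¹ ∈ alternatingGroup (Fin n) := by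
        rw [map_inv]; exact inv_mem hxa
      have h0 : Φ (ofSubtype x * ofSubtype x⁻¹) j = Φ (ofSubtype x⁻¹) j + Φ (ofSubtype x) j :=
        hadd _ _ hxa hxinva (hfix x)
      rw [← map_mul, mul_inv_cancel, map_one, hΦ1] at h0
      simp only [Finsupp.coe_zero, Pi.zero_apply] at h0
      rw [ihx, add_zero] at h0
      exact h0.symm
  have := key _ hsub_mem
  rwa [hg_eq] at this

end Statement4Aux

open Statement4Aux in
/-- For odd `n ≥ 5`, the first cohomology of the alternating group `A_n`
acting on `V = F_2^n / span(1,…,1)` vanishes: `H¹(A_n, V) = 0`. -/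
theorem statement4 (n : ℕ) (hn5 : 5 ≤ n) (hnodd : Odd n) :
    Subsingleton (groupCohomology.H1 (Rep.of
      (MonoidHom.comp (stdQuotRep 2 n) (alternatingGroup (Fin n)).subtype))) := by
  classical
  set G := alternatingGroup (Fin n)
  set ρ' := MonoidHom.comp (stdQuotRep 2 n) G.subtype with hρ'
  set A : Rep (ZMod 2) G := Rep.of ρ' with hA
  suffices hz : ∀ f : groupCohomology.cocycles₁ A, groupCohomology.H1π A f = 0 by
    refine ⟨fun a b => ?_⟩
    induction a using groupCohomology.H1_induction_on with | h x => ?_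
    induction b using groupCohomology.H1_induction_on with | h y => ?_
    rw [hz, hz]
  intro f
  rw [groupCohomology.H1π_eq_zero_iff]
  have hcob : ∀ x : (Fin n →₀ ZMod 2) ⧸ allOnesLine 2 n,
      (∀ g : G, A.ρ g x - x = f.1 g) → ⇑f ∈ groupCohomology.coboundaries₁ A :=
    fun x hx => ⟨x, funext hx⟩
  -- f is a cocycle valued in the quotient module
  have hρeq : ∀ (g : G) (x : (Fin n →₀ ZMod 2) ⧸ allOnesLine 2 n),
      A.ρ g x = stdQuotRep 2 n (g : Perm (Fin n)) x := fun _ _ => rfl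
  have hf : ∀ g h : G, f.1 (g * h) = A.ρ g (f.1 h) + f.1 g := by
    intro g h
    exact (groupCohomology.mem_cocycles₁_iff (A := A) f.1).1 f.2 g h
  have hf1 : f.1 1 = 0 := groupCohomology.cocycles₁_map_one f
  -- lift to a cocycle into the permutation module
  set F : G → (Fin n →₀ ZMod 2) := fun g => sect n hnodd (f.1 g) with hF
  have hFcoc : ∀ g h : G, F (g * h) = permRep 2 n (g : Perm (Fin n)) (F h) + F g := by
    intro g h
    rw [hF]
    simp only
    rw [hf g h]
    show sect n hnodd (A.ρ g (f.1 h) + f.1 g) = _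
    rw [hρeq, map_add, sect_equivariant hnodd]
  -- extend to all permutations
  set Φ : Perm (Fin n) → (Fin n →₀ ZMod 2) := fun g =>
    if hg : g ∈ G then F ⟨g, hg⟩ else 0 with hΦdef
  have hΦval : ∀ g : G, Φ (g : Perm (Fin n)) = F g := by
    intro g
    rw [hΦdef]
    simp only [g.2, dif_pos]
  have hΦcoc : ∀ g h : Perm (Fin n), g ∈ G → h ∈ G →
      Φ (g * h) = permRep 2 n g (Φ h) + Φ g := by
    intro g h hg hh
    have : Φ (g * h) = F (⟨g, hg⟩ * ⟨h, hh⟩) := hΦval ⟨g * h, mul_mem hg hh⟩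
    rw [this, hFcoc ⟨g, hg⟩ ⟨h, hh⟩, hΦval ⟨g, hg⟩, hΦval ⟨h, hh⟩]
  have hΦ1 : Φ 1 = 0 := by
    have : Φ (1 : Perm (Fin n)) = F 1 := hΦval 1
    rw [this, hF]
    simp only
    rw [hf1, map_zero]
  -- choose group elements moving the base point
  set i₀ : Fin n := ⟨0, by omega⟩ with hi₀
  have choice : ∀ i : Fin n, ∃ g : Perm (Fin n), g ∈ G ∧ g i₀ = i := fun i =>
    exists_even_sending hn5 i₀ i
  choose gto hgmem hgval using choice
  -- the candidate coboundary vector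
  set v : Fin n →₀ ZMod 2 := Finsupp.equivFunOnFinite.symm (fun i => Φ (gto i) i) with hv
  have hv_apply : ∀ i : Fin n, v i = Φ (gto i) i := fun i => rfl
  -- well-definedness
  have wd : ∀ (i : Fin n) (g : Perm (Fin n)), g ∈ G → g i₀ = i → Φ g i = v i := by
    intro i g hg hgi
    have hmem' : (gto i)⁻¹ * g ∈ G := mul_mem (inv_mem (hgmem i)) hg
    have hfix' : ((gto i)⁻¹ * g) i₀ = i₀ := by
      rw [Perm.mul_apply, hgi, Perm.inv_eq_iff_eq]
      exact (hgval i).symm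
    have hzero : Φ ((gto i)⁻¹ * g) i₀ = 0 :=
      stab_vanish Φ hΦcoc hΦ1 i₀ _ hmem' hfix'
    have hcomp : Φ (gto i * ((gto i)⁻¹ * g)) i
        = Φ ((gto i)⁻¹ * g) ((gto i)⁻¹ i) + Φ (gto i) i := by
      rw [hΦcoc _ _ (hgmem i) hmem', Finsupp.add_apply, permRep_apply]
    have hginv : (gto i)⁻¹ i = i₀ := by
      rw [Perm.inv_eq_iff_eq]
      exact (hgval i).symm
    rw [mul_inv_cancel_left] at hcomp
    rw [hcomp, hginv, hzero, zero_add, hv_apply]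
  -- the key identity Φ g i = v (g⁻¹ i) + v i
  have main : ∀ (g : Perm (Fin n)), g ∈ G → ∀ i : Fin n, Φ g i = v (g⁻¹ i) + v i := by
    intro g hg i
    set j : Fin n := g⁻¹ i with hj
    have hgj : g j = i := by rw [hj]; exact Equiv.apply_symm_apply g i
    have hmem' : g * gto j ∈ G := mul_mem hg (hgmem j)
    have hval' : (g * gto j) i₀ = i := by rw [Perm.mul_apply, hgval j, hgj]
    have h1 : Φ (g * gto j) i = v i := wd i _ hmem' hval'
    have h2 : Φ (g * gto j) i = Φ (gto j) (g⁻¹ i) + Φ g i := by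
      rw [hΦcoc _ _ hg (hgmem j), Finsupp.add_apply, permRep_apply]
    have h3 : Φ (gto j) (g⁻¹ i) = v j := by rw [← hj, hv_apply]
    rw [h2, h3] at h1
    -- h1 : v j + Φ g i = v i
    have := congrArg (fun a => v j + a) h1.symm
    rw [← add_assoc, zmod2_add_self, zero_add] at this
    rw [← this, hj]
  -- conclude: F g = permRep g v + v, hence f is a coboundary
  refine hcob (Submodule.Quotient.mk v) fun g => ?_
  have hFg : F g = permRep 2 n (g : Perm (Fin n)) v + v := by
    apply Finsupp.ext
    intro i
    rw [Finsupp.add_apply, permRep_apply, ← hΦval g]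
    exact main (g : Perm (Fin n)) g.2 i
  have hfg : f.1 g = Submodule.Quotient.mk (F g) := (mk_sect hnodd (f.1 g)).symm
  have hgoal : (stdQuotRep 2 n (g : Perm (Fin n))) (Submodule.Quotient.mk v)
      - Submodule.Quotient.mk v = f.1 g := by
    rw [hfg, hFg, Submodule.Quotient.mk_add, stdQuotRep_mk, sub_eq_add_neg]
    congr 1
    exact neg_eq_of_add_eq_zero_right
      (char2_add_self (M := (Fin n →₀ ZMod 2) ⧸ allOnesLine 2 n) _)
  exact hgoal
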